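/- Let M(i,j,U,V) be a configuration of Minsky's universal Turing machine. If (i,j) = (4,3), then t·F(i,j,U,V) = 0 in the algebra H. Otherwise, t·F(i,j,U,V) = F(i',j',U',V')·s in H, where M(i',j',U',V') is the configuration obtained from M(i,j,U,V) by one machine step. -/
import Mathlib


noncomputable section

/-- Direction of the head movement of the Turing machine. -/
inductive Dir
  | L
  | R
deriving DecidableEq

/-- The instruction table of Minsky's universal Turing machine: for a state `i` and a color `j`,
`instr i j` is `some (d, q, p)` where `d` is the direction of the head movement, `q` the new
state and `p` the new color of the current cell; it is `none` exactly for the STOP pair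
`(4, 3)`. -/
def instr : Fin 7 → Fin 4 → Option (Dir × Fin 7 × Fin 4) := fun i j =>
  match i.val, j.val with
  | 0, 0 => some (Dir.L, 4, 1)
  | 0, 1 => some (Dir.L, 1, 3)
  | 0, 2 => some (Dir.R, 0, 0)
  | 0, 3 => some (Dir.R, 0, 1)
  | 1, 0 => some (Dir.L, 1, 2)
  | 1, 1 => some (Dir.L, 1, 3)
  | 1, 2 => some (Dir.R, 0, 0)
  | 1, 3 => some (Dir.L, 1, 3)
  | 2, 0 => some (Dir.R, 2, 2)
  | 2, 1 => some (Dir.R, 2, 1)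
  | 2, 2 => some (Dir.R, 2, 0)
  | 2, 3 => some (Dir.L, 4, 1)
  | 3, 0 => some (Dir.R, 3, 2)
  | 3, 1 => some (Dir.R, 3, 1)
  | 3, 2 => some (Dir.R, 3, 0)
  | 3, 3 => some (Dir.L, 4, 0)
  | 4, 0 => some (Dir.L, 5, 2)
  | 4, 1 => some (Dir.L, 4, 1)
  | 4, 2 => some (Dir.L, 4, 0)
  | 4, 3 => none
  | 5, 0 => some (Dir.L, 5, 2)
  | 5, 1 => some (Dir.L, 5, 1)
  | 5, 2 => some (Dir.L, 6, 2)
  | 5, 3 => some (Dir.R, 2, 1)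
  | 6, 0 => some (Dir.R, 0, 3)
  | 6, 1 => some (Dir.R, 6, 3)
  | 6, 2 => some (Dir.R, 6, 2)
  | 6, 3 => some (Dir.R, 3, 1)
  | _, _ => none

/-- A configuration `M(i, j, U, V)` of the machine: the current state `i`, the color `j` of the
current cell, and the lists `U`, `V` of colors of the tape to the left and to the right of the
head. -/
structure Config where
  state : Fin 7
  color : Fin 4
  left : List (Fin 4)
  right : List (Fin 4)

/-- One step of the machine: for a left pair, `M(i,j,U'++[k],V)` passes to
`M(q i j, k, U', p i j :: V)` and `M(i,j,[],V)` passes to `M(q i j, 0, [], p i j :: V)`;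
for a right pair, `M(i,j,U,k::V')` passes to `M(q i j, k, U ++ [p i j], V')` and
`M(i,j,U,[])` passes to `M(q i j, 0, U ++ [p i j], [])`. No step is possible from the
STOP pair `(4,3)`. -/
def step (c : Config) : Option Config :=
  match instr c.state c.color with
  | none => none
  | some (Dir.L, q, p) =>
    match c.left.reverse with
    | [] => some ⟨q, 0, [], p :: c.right⟩
    | k :: U' => some ⟨q, k, U'.reverse, p :: c.right⟩
  | some (Dir.R, q, p) =>
    match c.right with
    | [] => some ⟨q, 0, c.left ++ [p], []⟩
    | k :: V' => some ⟨q, k, c.left ++ [p], V'⟩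

/-- Iterating `n` steps of the machine. -/
def stepsFrom : ℕ → Config → Option Config
  | 0, c => some c
  | n + 1, c => (step c).bind (stepsFrom n)

/-- The machine halts from the configuration `c` if after finitely many steps it reaches a
configuration whose (state, current color) pair is `(4, 3)`. -/
def Halts (c : Config) : Prop :=
  ∃ n c', stepsFrom n c = some c' ∧ c'.state = 4 ∧ c'.color = 3

/-- The alphabet `Ψ = {t, s, a_0, …, a_3, Q_0, …, Q_6, P_0, …, P_3, L, R}`. -/
inductive Psi
  | t
  | s
  | a (k : Fin 4)
  | Q (i : Fin 7)
  | P (j : Fin 4)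
  | L
  | R
deriving DecidableEq, Fintype

/-- The image in the free algebra of a word over the alphabet `Ψ`. -/
def wrd (K : Type*) [Field K] (l : List Psi) : FreeAlgebra K Psi :=
  (l.map (FreeAlgebra.ι K)).prod

open Psi in
/-- The defining relations of the algebra `H`. -/
inductive HRel (K : Type*) [Field K] : FreeAlgebra K Psi → FreeAlgebra K Psi → Prop
  | rel1 (k : Fin 4) :
      HRel K (wrd K [t, L, a k]) (wrd K [L, t, a k])
  | rel2 (k l : Fin 4) :
      HRel K (wrd K [t, a k, a l]) (wrd K [a k, t, a l])
  | rel9 :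
      HRel K (wrd K [s, R]) (wrd K [R, s])
  | rel8 (k : Fin 4) :
      HRel K (wrd K [s, a k]) (wrd K [a k, s])
  | rel3 (i : Fin 7) (j : Fin 4) (q : Fin 7) (p : Fin 4) (k : Fin 4)
      (h : instr i j = some (Dir.L, q, p)) :
      HRel K (wrd K [t, a k, Q i, P j]) (wrd K [Q q, P k, a p, s])
  | rel5 (i : Fin 7) (j : Fin 4) (q : Fin 7) (p : Fin 4)
      (h : instr i j = some (Dir.L, q, p)) :
      HRel K (wrd K [t, L, Q i, P j]) (wrd K [L, Q q, P 0, a p, s])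
  | rel4 (i : Fin 7) (j : Fin 4) (q : Fin 7) (p : Fin 4) (l k : Fin 4)
      (h : instr i j = some (Dir.R, q, p)) :
      HRel K (wrd K [t, a l, Q i, P j, a k]) (wrd K [a l, a p, Q q, P k, s])
  | rel4b (i : Fin 7) (j : Fin 4) (q : Fin 7) (p : Fin 4) (k : Fin 4)
      (h : instr i j = some (Dir.R, q, p)) :
      HRel K (wrd K [t, L, Q i, P j, a k]) (wrd K [L, a p, Q q, P k, s])
  | rel6 (i : Fin 7) (j : Fin 4) (q : Fin 7) (p : Fin 4) (l : Fin 4)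
      (h : instr i j = some (Dir.R, q, p)) :
      HRel K (wrd K [t, a l, Q i, P j, R]) (wrd K [a l, a p, Q q, P 0, R, s])
  | rel6b (i : Fin 7) (j : Fin 4) (q : Fin 7) (p : Fin 4)
      (h : instr i j = some (Dir.R, q, p)) :
      HRel K (wrd K [t, L, Q i, P j, R]) (wrd K [L, a p, Q q, P 0, R, s])
  | rel7 :
      HRel K (wrd K [Q 4, P 3]) 0

/-- The algebra `H`: the quotient of the free associative unital `K`-algebra on `Ψ` by the
two-sided ideal generated by the defining relations. -/
abbrev AlgH (K : Type*) [Field K] := RingQuot (HRel K)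

/-- The image in `H` of a word over the alphabet `Ψ`. -/
def mkw (K : Type*) [Field K] (l : List Psi) : AlgH K :=
  RingQuot.mkAlgHom K (HRel K) (wrd K l)

/-- The image of the letter `t` in `H`. -/
def tEl (K : Type*) [Field K] : AlgH K := mkw K [Psi.t]

/-- The image of the letter `s` in `H`. -/
def sEl (K : Type*) [Field K] : AlgH K := mkw K [Psi.s]

/-- The word `L a_{u_1} ⋯ a_{u_k} Q_i P_j a_{v_1} ⋯ a_{v_l} R` associated to a configuration. -/
def confWord (c : Config) : List Psi :=
  Psi.L :: (c.left.map Psi.a ++ [Psi.Q c.state, Psi.P c.color] ++ c.right.map Psi.a ++ [Psi.R])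

/-- The element `F(i, j, U, V)` of the algebra `H` associated to a configuration. -/
def F (K : Type*) [Field K] (c : Config) : AlgH K := mkw K (confWord c)

namespace TmAux

open Psi

variable {K : Type*} [Field K]

lemma wrd_append (l1 l2 : List Psi) : wrd K (l1 ++ l2) = wrd K l1 * wrd K l2 := by
  simp [wrd]

lemma mkw_append (l1 l2 : List Psi) : mkw K (l1 ++ l2) = mkw K l1 * mkw K l2 := by
  simp [mkw, wrd_append, map_mul]

lemma mkw_cons (x : Psi) (l : List Psi) : mkw K (x :: l) = mkw K [x] * mkw K l :=
  mkw_append [x] l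

lemma mkw_rel {l1 l2 : List Psi} (h : HRel K (wrd K l1) (wrd K l2)) :
    mkw K l1 = mkw K l2 :=
  RingQuot.mkAlgHom_rel K h

lemma mkw_congr_r {l1 l2 : List Psi} (h : mkw K l1 = mkw K l2) (q : List Psi) :
    mkw K (l1 ++ q) = mkw K (l2 ++ q) := by rw [mkw_append, mkw_append, h]

lemma mkw_congr_l (p : List Psi) {l1 l2 : List Psi} (h : mkw K l1 = mkw K l2) :
    mkw K (p ++ l1) = mkw K (p ++ l2) := by rw [mkw_append, mkw_append, h]

lemma pushTa (m : Fin 4) : ∀ (W : List (Fin 4)) (k : Fin 4) (rest : List Psi),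
    mkw K (t :: a m :: (W.map a ++ (a k :: rest)))
      = mkw K (a m :: (W.map a ++ (t :: a k :: rest)))
  | [], k, rest => by
      simpa using mkw_congr_r (K := K) (mkw_rel (HRel.rel2 m k)) rest
  | w :: W', k, rest => by
      have h1 := mkw_congr_r (K := K) (mkw_rel (HRel.rel2 m w)) (W'.map a ++ (a k :: rest))
      have h2 := pushTa w W' k rest
      calc mkw K (t :: a m :: ((w :: W').map a ++ (a k :: rest)))
          = mkw K ([t, a m, a w] ++ (W'.map a ++ (a k :: rest))) := by simp
        _ = mkw K ([a m, t, a w] ++ (W'.map a ++ (a k :: rest))) := h1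
        _ = mkw K [a m] * mkw K (t :: a w :: (W'.map a ++ (a k :: rest))) := by
              rw [← mkw_cons]; simp
        _ = mkw K [a m] * mkw K (a w :: (W'.map a ++ (t :: a k :: rest))) := by rw [h2]
        _ = mkw K (a m :: ((w :: W').map a ++ (t :: a k :: rest))) := by
              rw [← mkw_cons]; simp

lemma pushT : ∀ (W : List (Fin 4)) (k : Fin 4) (rest : List Psi),
    mkw K (t :: L :: (W.map a ++ (a k :: rest)))
      = mkw K (L :: (W.map a ++ (t :: a k :: rest)))
  | [], k, rest => by
      simpa using mkw_congr_r (K := K) (mkw_rel (HRel.rel1 k)) rest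
  | w :: W', k, rest => by
      have h1 := mkw_congr_r (K := K) (mkw_rel (HRel.rel1 w)) (W'.map a ++ (a k :: rest))
      have h2 := pushTa (K := K) w W' k rest
      calc mkw K (t :: L :: ((w :: W').map a ++ (a k :: rest)))
          = mkw K ([t, L, a w] ++ (W'.map a ++ (a k :: rest))) := by simp
        _ = mkw K ([L, t, a w] ++ (W'.map a ++ (a k :: rest))) := h1
        _ = mkw K [L] * mkw K (t :: a w :: (W'.map a ++ (a k :: rest))) := by
              rw [← mkw_cons]; simp
        _ = mkw K [L] * mkw K (a w :: (W'.map a ++ (t :: a k :: rest))) := by rw [h2]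
        _ = mkw K (L :: ((w :: W').map a ++ (t :: a k :: rest))) := by
              rw [← mkw_cons]; simp

lemma pushS : ∀ (V : List (Fin 4)),
    mkw K (s :: (V.map a ++ [R])) = mkw K (V.map a ++ [R, s])
  | [] => by
      simpa using mkw_rel (K := K) (HRel.rel9 ..)
  | v :: V' => by
      have h1 := mkw_congr_r (K := K) (mkw_rel (HRel.rel8 v)) (V'.map a ++ [R])
      have h2 := pushS V'
      calc mkw K (s :: ((v :: V').map a ++ [R]))
          = mkw K ([s, a v] ++ (V'.map a ++ [R])) := by simp
        _ = mkw K ([a v, s] ++ (V'.map a ++ [R])) := h1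
        _ = mkw K [a v] * mkw K (s :: (V'.map a ++ [R])) := by
              rw [← mkw_cons]; simp
        _ = mkw K [a v] * mkw K (V'.map a ++ [R, s]) := by rw [h2]
        _ = mkw K ((v :: V').map a ++ [R, s]) := by
              rw [← mkw_cons]; simp

lemma instr_none : ∀ i j, instr i j = none → i = 4 ∧ j = 3 := by decide

end TmAux

/-- If `(i, j) = (4, 3)` then `t · F(i,j,U,V) = 0` in the algebra `H`;
otherwise `t · F(i,j,U,V) = F(i',j',U',V') · s` in `H`, where `M(i',j',U',V')` is the
configuration obtained from `M(i,j,U,V)` by one machine step. -/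
theorem t_mul_F (K : Type*) [Field K] (c : Config) :
    (c.state = 4 ∧ c.color = 3 → tEl K * F K c = 0) ∧
    (¬ (c.state = 4 ∧ c.color = 3) →
      ∃ c', step c = some c' ∧ tEl K * F K c = F K c' * sEl K) := by
  obtain ⟨i, j, U, V⟩ := c
  open Psi in
  constructor
  · rintro ⟨hi, hj⟩
    simp only at hi hj
    subst hi; subst hj
    have h0 : (mkw K [Psi.Q 4, Psi.P 3] : AlgH K) = 0 := by
      have h := RingQuot.mkAlgHom_rel K (HRel.rel7 (K := K))
      simpa [mkw] using h
    have hF : F K ⟨4, 3, U, V⟩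
        = mkw K (Psi.L :: U.map Psi.a) * mkw K [Psi.Q 4, Psi.P 3]
            * mkw K (V.map Psi.a ++ [Psi.R]) := by
      rw [F, ← TmAux.mkw_append, ← TmAux.mkw_append]; congr 1 <;> simp [confWord]
    rw [hF, h0, mul_zero, zero_mul, mul_zero]
  · intro hne
    rcases hinstr : instr i j with _ | ⟨d, q, p⟩
    · exact absurd (TmAux.instr_none i j hinstr) hne
    cases d with
    | L =>
      rcases hU : U.reverse with _ | ⟨k, U0⟩
      · have hU0 : U = [] := by simpa using congrArg List.reverse hU
        subst hU0
        refine ⟨⟨q, 0, [], p :: V⟩, by simp [step, hinstr], ?_⟩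
        have e1 : tEl K * F K ⟨i, j, [], V⟩
            = mkw K ([t, L, Q i, P j] ++ (V.map a ++ [R])) := by
          rw [tEl, F, ← TmAux.mkw_append]; congr 1 <;> simp [confWord]
        have e2 : F K ⟨q, 0, [], p :: V⟩ * sEl K
            = mkw K ([L, Q q, P 0, Psi.a p] ++ (V.map a ++ [R, s])) := by
          rw [F, sEl, ← TmAux.mkw_append]; congr 1 <;> simp [confWord]
        rw [e1, e2]
        calc mkw K ([t, L, Q i, P j] ++ (V.map a ++ [R]))
            = mkw K ([L, Q q, P 0, Psi.a p, s] ++ (V.map a ++ [R])) :=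
              TmAux.mkw_congr_r (TmAux.mkw_rel (HRel.rel5 i j q p hinstr)) _
          _ = mkw K ([L, Q q, P 0, Psi.a p] ++ (s :: (V.map a ++ [R]))) := rfl
          _ = mkw K ([L, Q q, P 0, Psi.a p] ++ (V.map a ++ [R, s])) :=
              TmAux.mkw_congr_l _ (TmAux.pushS V)
      · have hU0 : U = U0.reverse ++ [k] := by
          rw [← List.reverse_reverse U, hU]; simp
        subst hU0
        refine ⟨⟨q, k, U0.reverse, p :: V⟩, by simp [step, hinstr], ?_⟩
        have e1 : tEl K * F K ⟨i, j, U0.reverse ++ [k], V⟩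
            = mkw K (t :: L :: (U0.reverse.map a
                ++ (Psi.a k :: (Q i :: P j :: (V.map a ++ [R]))))) := by
          rw [tEl, F, ← TmAux.mkw_append]; congr 1 <;> simp [confWord]
        have e2 : F K ⟨q, k, U0.reverse, p :: V⟩ * sEl K
            = mkw K ((L :: U0.reverse.map a ++ [Q q, P k, Psi.a p])
                ++ (V.map a ++ [R, s])) := by
          rw [F, sEl, ← TmAux.mkw_append]; congr 1 <;> simp [confWord]
        rw [e1, e2]
        calc mkw K (t :: L :: (U0.reverse.map a
                ++ (Psi.a k :: (Q i :: P j :: (V.map a ++ [R])))))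
            = mkw K (L :: (U0.reverse.map a
                ++ (t :: Psi.a k :: (Q i :: P j :: (V.map a ++ [R]))))) :=
              TmAux.pushT U0.reverse k _
          _ = mkw K ((L :: U0.reverse.map a)
                ++ ([t, Psi.a k, Q i, P j] ++ (V.map a ++ [R]))) := by congr 1 <;> simp
          _ = mkw K ((L :: U0.reverse.map a)
                ++ ([Q q, P k, Psi.a p, s] ++ (V.map a ++ [R]))) :=
              TmAux.mkw_congr_l _
                (TmAux.mkw_congr_r (TmAux.mkw_rel (HRel.rel3 i j q p k hinstr)) _)
          _ = mkw K ((L :: U0.reverse.map a ++ [Q q, P k, Psi.a p])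
                ++ (s :: (V.map a ++ [R]))) := by congr 1 <;> simp
          _ = mkw K ((L :: U0.reverse.map a ++ [Q q, P k, Psi.a p])
                ++ (V.map a ++ [R, s])) := TmAux.mkw_congr_l _ (TmAux.pushS V)
    | R =>
      rcases hU : U.reverse with _ | ⟨k, U0⟩
      · have hU0 : U = [] := by simpa using congrArg List.reverse hU
        subst hU0
        rcases V with _ | ⟨v, V'⟩
        · refine ⟨⟨q, 0, [p], []⟩, by simp [step, hinstr], ?_⟩
          have e1 : tEl K * F K ⟨i, j, [], []⟩ = mkw K [t, L, Q i, P j, R] := by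
            rw [tEl, F, ← TmAux.mkw_append]; congr 1 <;> simp [confWord]
          have e2 : F K ⟨q, 0, [p], []⟩ * sEl K
              = mkw K [L, Psi.a p, Q q, P 0, R, s] := by
            rw [F, sEl, ← TmAux.mkw_append]; congr 1 <;> simp [confWord]
          rw [e1, e2]
          exact TmAux.mkw_rel (HRel.rel6b i j q p hinstr)
        · refine ⟨⟨q, v, [p], V'⟩, by simp [step, hinstr], ?_⟩
          have e1 : tEl K * F K ⟨i, j, [], v :: V'⟩
              = mkw K ([t, L, Q i, P j, Psi.a v] ++ (V'.map a ++ [R])) := by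
            rw [tEl, F, ← TmAux.mkw_append]; congr 1 <;> simp [confWord]
          have e2 : F K ⟨q, v, [p], V'⟩ * sEl K
              = mkw K ([L, Psi.a p, Q q, P v] ++ (V'.map a ++ [R, s])) := by
            rw [F, sEl, ← TmAux.mkw_append]; congr 1 <;> simp [confWord]
          rw [e1, e2]
          calc mkw K ([t, L, Q i, P j, Psi.a v] ++ (V'.map a ++ [R]))
              = mkw K ([L, Psi.a p, Q q, P v, s] ++ (V'.map a ++ [R])) :=
                TmAux.mkw_congr_r (TmAux.mkw_rel (HRel.rel4b i j q p v hinstr)) _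
            _ = mkw K ([L, Psi.a p, Q q, P v] ++ (s :: (V'.map a ++ [R]))) := rfl
            _ = mkw K ([L, Psi.a p, Q q, P v] ++ (V'.map a ++ [R, s])) :=
                TmAux.mkw_congr_l _ (TmAux.pushS V')
      · have hU0 : U = U0.reverse ++ [k] := by
          rw [← List.reverse_reverse U, hU]; simp
        subst hU0
        rcases V with _ | ⟨v, V'⟩
        · refine ⟨⟨q, 0, (U0.reverse ++ [k]) ++ [p], []⟩, by simp [step, hinstr], ?_⟩
          have e1 : tEl K * F K ⟨i, j, U0.reverse ++ [k], []⟩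
              = mkw K (t :: L :: (U0.reverse.map a
                  ++ (Psi.a k :: (Q i :: P j :: [R])))) := by
            rw [tEl, F, ← TmAux.mkw_append]; congr 1 <;> simp [confWord]
          have e2 : F K ⟨q, 0, (U0.reverse ++ [k]) ++ [p], []⟩ * sEl K
              = mkw K ((L :: U0.reverse.map a)
                  ++ [Psi.a k, Psi.a p, Q q, P 0, R, s]) := by
            rw [F, sEl, ← TmAux.mkw_append]; congr 1 <;> simp [confWord]
          rw [e1, e2]
          calc mkw K (t :: L :: (U0.reverse.map a ++ (Psi.a k :: (Q i :: P j :: [R]))))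
              = mkw K (L :: (U0.reverse.map a
                  ++ (t :: Psi.a k :: (Q i :: P j :: [R])))) :=
                TmAux.pushT U0.reverse k _
            _ = mkw K ((L :: U0.reverse.map a) ++ [t, Psi.a k, Q i, P j, R]) := by
                congr 1 <;> simp
            _ = mkw K ((L :: U0.reverse.map a) ++ [Psi.a k, Psi.a p, Q q, P 0, R, s]) :=
                TmAux.mkw_congr_l _ (TmAux.mkw_rel (HRel.rel6 i j q p k hinstr))
        · refine ⟨⟨q, v, (U0.reverse ++ [k]) ++ [p], V'⟩, by simp [step, hinstr], ?_⟩
          have e1 : tEl K * F K ⟨i, j, U0.reverse ++ [k], v :: V'⟩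
              = mkw K (t :: L :: (U0.reverse.map a
                  ++ (Psi.a k :: (Q i :: P j :: Psi.a v :: (V'.map a ++ [R]))))) := by
            rw [tEl, F, ← TmAux.mkw_append]; congr 1 <;> simp [confWord]
          have e2 : F K ⟨q, v, (U0.reverse ++ [k]) ++ [p], V'⟩ * sEl K
              = mkw K ((L :: U0.reverse.map a ++ [Psi.a k, Psi.a p, Q q, P v])
                  ++ (V'.map a ++ [R, s])) := by
            rw [F, sEl, ← TmAux.mkw_append]; congr 1 <;> simp [confWord]
          rw [e1, e2]
          calc mkw K (t :: L :: (U0.reverse.map a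
                  ++ (Psi.a k :: (Q i :: P j :: Psi.a v :: (V'.map a ++ [R])))))
              = mkw K (L :: (U0.reverse.map a
                  ++ (t :: Psi.a k :: (Q i :: P j :: Psi.a v :: (V'.map a ++ [R]))))) :=
                TmAux.pushT U0.reverse k _
            _ = mkw K ((L :: U0.reverse.map a)
                  ++ ([t, Psi.a k, Q i, P j, Psi.a v] ++ (V'.map a ++ [R]))) := by
                congr 1 <;> simp
            _ = mkw K ((L :: U0.reverse.map a)
                  ++ ([Psi.a k, Psi.a p, Q q, P v, s] ++ (V'.map a ++ [R]))) :=
                TmAux.mkw_congr_l _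
                  (TmAux.mkw_congr_r (TmAux.mkw_rel (HRel.rel4 i j q p k v hinstr)) _)
            _ = mkw K ((L :: U0.reverse.map a ++ [Psi.a k, Psi.a p, Q q, P v])
                  ++ (s :: (V'.map a ++ [R]))) := by congr 1 <;> simp
            _ = mkw K ((L :: U0.reverse.map a ++ [Psi.a k, Psi.a p, Q q, P v])
                  ++ (V'.map a ++ [R, s])) := TmAux.mkw_congr_l _ (TmAux.pushS V')
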